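/- Let 0 < b < a and τ = (a-b)/(log a - log b). Then I(b,τ) ≤ (√a - √b)² ≤ 2·I(b,τ), where I(μ,d) = μ - d + d·log(d/μ). -/

import Mathlib

/-- Rate function `I(μ,d) = μ - d + d·log(d/μ)`. -/
noncomputable def rateI (μ d : ℝ) : ℝ := μ - d + d * Real.log (d / μ)

/-- `sinh v ≤ v * cosh v` for `v ≥ 0`. -/
lemma sinh_le_mul_cosh {v : ℝ} (hv : 0 ≤ v) : Real.sinh v ≤ v * Real.cosh v := by
  have key : ∀ x : ℝ, HasDerivAt (fun t => t * Real.cosh t - Real.sinh t)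
      (x * Real.sinh x) x := by
    intro x
    have h1 : HasDerivAt (fun t : ℝ => t * Real.cosh t)
        (1 * Real.cosh x + x * Real.sinh x) x :=
      (hasDerivAt_id x).mul (Real.hasDerivAt_cosh x)
    have h2 := h1.sub (Real.hasDerivAt_sinh x)
    exact h2.congr_deriv (by ring)
  have mono : Monotone (fun t => t * Real.cosh t - Real.sinh t) := by
    apply monotone_of_hasDerivAt_nonneg (f' := fun x => x * Real.sinh x) key
    intro x
    show (0:ℝ) ≤ x * Real.sinh x
    rcases le_or_gt 0 x with h | h
    · exact mul_nonneg h (by simpa using h)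
    · have hs : Real.sinh x ≤ 0 := by simpa using h.le
      nlinarith [mul_nonneg (neg_nonneg.2 h.le) (neg_nonneg.2 hs)]
  have := mono hv
  simpa using this

/-- `cosh v * log (cosh v) ≤ v * sinh v` for `v ≥ 0`. -/
lemma cosh_mul_log_cosh_le {v : ℝ} (hv : 0 ≤ v) :
    Real.cosh v * Real.log (Real.cosh v) ≤ v * Real.sinh v := by
  set f : ℝ → ℝ := fun t => t * Real.sinh t - Real.cosh t * Real.log (Real.cosh t) with hf
  have key : ∀ x : ℝ, HasDerivAt f
      (x * Real.cosh x - Real.sinh x * Real.log (Real.cosh x)) x := by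
    intro x
    have hc : Real.cosh x ≠ 0 := (Real.cosh_pos x).ne'
    have h1 : HasDerivAt (fun t : ℝ => t * Real.sinh t)
        (1 * Real.sinh x + x * Real.cosh x) x :=
      (hasDerivAt_id x).mul (Real.hasDerivAt_sinh x)
    have hlog : HasDerivAt (fun t : ℝ => Real.log (Real.cosh t))
        (Real.sinh x / Real.cosh x) x := (Real.hasDerivAt_cosh x).log hc
    have h2 : HasDerivAt (fun t : ℝ => Real.cosh t * Real.log (Real.cosh t))
        (Real.sinh x * Real.log (Real.cosh x)
          + Real.cosh x * (Real.sinh x / Real.cosh x)) x :=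
      (Real.hasDerivAt_cosh x).mul hlog
    have h3 := h1.sub h2
    have hcs : Real.cosh x * (Real.sinh x / Real.cosh x) = Real.sinh x := by field_simp
    exact h3.congr_deriv (by rw [hcs]; ring)
  have mono : MonotoneOn f (Set.Ici 0) := by
    apply monotoneOn_of_deriv_nonneg (convex_Ici 0)
    · exact fun x _ => (key x).differentiableAt.continuousAt.continuousWithinAt
    · intro x _
      exact (key x).differentiableAt.differentiableWithinAt
    · intro x hx
      rw [(key x).deriv]
      rw [interior_Ici, Set.mem_Ioi] at hx
      have hlogle : Real.log (Real.cosh x) ≤ x := by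
        have h1 : Real.cosh x ≤ Real.exp x := by
          rw [Real.cosh_eq]
          have : Real.exp (-x) ≤ Real.exp x := Real.exp_le_exp.2 (by linarith)
          linarith
        calc Real.log (Real.cosh x) ≤ Real.log (Real.exp x) :=
              Real.log_le_log (Real.cosh_pos x) h1
          _ = x := Real.log_exp x
      have hs : 0 ≤ Real.sinh x := by simpa using hx.le
      have hsc : Real.sinh x ≤ Real.cosh x := (Real.sinh_lt_cosh x).le
      nlinarith [Real.cosh_pos x]
  have h0 : f 0 ≤ f v := mono (by simp) hv hv
  simp only [hf] at h0
  simp only [Real.sinh_zero, Real.cosh_zero, Real.log_one] at h0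
  linarith

/-- Master lemma: with `S = sinh u / u`, `S * log S ≤ cosh u - 1` for `u > 0`. -/
lemma mul_log_div_le_cosh {u : ℝ} (hu : 0 < u) :
    (Real.sinh u / u) * Real.log (Real.sinh u / u) ≤ Real.cosh u - 1 := by
  set v := u / 2 with hv
  have hv0 : 0 ≤ v := by positivity
  have hu2 : u = 2 * v := by rw [hv]; ring
  have hsinh : Real.sinh u = 2 * Real.sinh v * Real.cosh v := by
    rw [hu2, Real.sinh_two_mul]
  have hcosh : Real.cosh u = 2 * Real.sinh v ^ 2 + 1 := by
    rw [hu2, Real.cosh_two_mul, Real.cosh_sq]; ring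
  have hcv : 0 < Real.cosh v := Real.cosh_pos v
  have hsv : 0 ≤ Real.sinh v := by simpa using hv0
  set S := Real.sinh u / u with hS
  have hS1 : 1 ≤ S := by
    rw [hS, le_div_iff₀ hu]
    simpa using (Real.self_le_sinh_iff.2 hu.le)
  have hS0 : 0 < S := lt_of_lt_of_le one_pos hS1
  have hSle : S ≤ Real.cosh v ^ 2 := by
    rw [hS, div_le_iff₀ hu, hsinh, hu2]
    have := sinh_le_mul_cosh hv0
    nlinarith
  have hlogS : Real.log S ≤ 2 * (v * Real.sinh v / Real.cosh v) := by
    calc Real.log S ≤ Real.log (Real.cosh v ^ 2) := Real.log_le_log hS0 hSle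
      _ = 2 * Real.log (Real.cosh v) := by
          rw [Real.log_pow]; push_cast; ring
      _ ≤ 2 * (v * Real.sinh v / Real.cosh v) := by
          have h1 := cosh_mul_log_cosh_le hv0
          have h2 : Real.log (Real.cosh v) ≤ v * Real.sinh v / Real.cosh v := by
            rw [le_div_iff₀ hcv]
            nlinarith
          linarith
  have hkey : S * (2 * (v * Real.sinh v / Real.cosh v)) = Real.cosh u - 1 := by
    rw [hS, hsinh, hcosh, hu2]
    field_simp
    rw [mul_div_assoc, div_self (ne_of_gt (by rw [hv]; positivity))]; ring
  calc S * Real.log S ≤ S * (2 * (v * Real.sinh v / Real.cosh v)) :=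
        mul_le_mul_of_nonneg_left hlogS hS0.le
    _ = Real.cosh u - 1 := hkey

set_option maxHeartbeats 1000000 in
/-- For 0 < b < a and τ = (a-b)/(log a - log b),
`I(b,τ) ≤ (√a - √b)² ≤ 2·I(b,τ)`. -/
theorem rateI_tau_bounds (a b τ : ℝ) (hb : 0 < b) (hba : b < a)
    (hτ : τ = (a - b) / (Real.log a - Real.log b)) :
    rateI b τ ≤ (Real.sqrt a - Real.sqrt b) ^ 2 ∧
    (Real.sqrt a - Real.sqrt b) ^ 2 ≤ 2 * rateI b τ := by
  have ha : 0 < a := lt_trans hb hba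
  set u := (Real.log a - Real.log b) / 2 with hu_def
  have hu : 0 < u := by
    have := Real.log_lt_log hb hba
    rw [hu_def]; linarith
  have hsa : 0 < Real.sqrt a := Real.sqrt_pos.2 ha
  have hsb : 0 < Real.sqrt b := Real.sqrt_pos.2 hb
  have hexpa : Real.exp (Real.log a / 2) = Real.sqrt a := by
    rw [← Real.log_sqrt ha.le, Real.exp_log hsa]
  have hexpb : Real.exp (Real.log b / 2) = Real.sqrt b := by
    rw [← Real.log_sqrt hb.le, Real.exp_log hsb]
  have hexpu : Real.exp u = Real.sqrt a / Real.sqrt b := by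
    rw [hu_def, sub_div, Real.exp_sub, hexpa, hexpb]
  have hexpnu : Real.exp (-u) = Real.sqrt b / Real.sqrt a := by
    rw [Real.exp_neg, hexpu, inv_div]
  set g := Real.sqrt a * Real.sqrt b with hg_def
  have hg : 0 < g := mul_pos hsa hsb
  have hsqa : Real.sqrt a * Real.sqrt a = a := Real.mul_self_sqrt ha.le
  have hsqb : Real.sqrt b * Real.sqrt b = b := Real.mul_self_sqrt hb.le
  have hA : a = g * Real.exp u := by
    rw [hexpu, hg_def]
    field_simp
    linear_combination -hsqa
  have hB : b = g * Real.exp (-u) := by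
    rw [hexpnu, hg_def]
    field_simp
    linear_combination -hsqb
  have hsinh_eq : a - b = 2 * g * Real.sinh u := by
    rw [Real.sinh_eq]
    linear_combination hA - hB
  have hcosh_eq : a + b = 2 * g * Real.cosh u := by
    rw [Real.cosh_eq]
    linear_combination hA + hB
  set S := Real.sinh u / u with hS_def
  have hS1 : 1 ≤ S := by
    rw [hS_def, le_div_iff₀ hu]
    simpa using (Real.self_le_sinh_iff.2 hu.le)
  have hS0 : 0 < S := lt_of_lt_of_le one_pos hS1
  have hSu : S * u = Real.sinh u := div_mul_cancel₀ _ hu.ne'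
  have hτ_eq : τ = g * S := by
    have hL : Real.log a - Real.log b = 2 * u := by rw [hu_def]; ring
    rw [hτ, hL, hsinh_eq, hS_def]
    field_simp
  have hτb : τ / b = S * Real.exp u := by
    rw [hτ_eq, hB, Real.exp_neg]
    field_simp
  have hlogτb : Real.log (τ / b) = Real.log S + u := by
    rw [hτb, Real.log_mul hS0.ne' (Real.exp_pos u).ne', Real.log_exp]
  have hch : Real.exp (-u) + Real.sinh u = Real.cosh u := by
    rw [Real.sinh_eq, Real.cosh_eq]; ring
  have hrate : rateI b τ = g * (Real.cosh u - S + S * Real.log S) := by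
    show b - τ + τ * Real.log (τ / b) = _
    rw [hlogτb, hτ_eq, hB]
    linear_combination g * hSu + g * hch
  have htarget : (Real.sqrt a - Real.sqrt b) ^ 2 = g * (2 * Real.cosh u - 2) := by
    have hexp : (Real.sqrt a - Real.sqrt b) ^ 2 = a + b - 2 * g := by
      rw [hg_def]; linear_combination hsqa + hsqb
    rw [hexp, hcosh_eq]; ring
  have hmaster : S * Real.log S ≤ Real.cosh u - 1 := by
    have h := mul_log_div_le_cosh hu
    rw [← hS_def] at h
    exact h
  have hlb : S - 1 ≤ S * Real.log S := by
    have h1 : 1 - S⁻¹ ≤ Real.log S := Real.one_sub_inv_le_log_of_pos hS0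
    have h2 : S * (1 - S⁻¹) ≤ S * Real.log S := mul_le_mul_of_nonneg_left h1 hS0.le
    have h3 : S * (1 - S⁻¹) = S - 1 := by field_simp
    linarith
  constructor
  · rw [hrate, htarget]
    have hin : Real.cosh u - S + S * Real.log S ≤ 2 * Real.cosh u - 2 := by linarith
    exact mul_le_mul_of_nonneg_left hin hg.le
  · rw [hrate, htarget]
    have hin : 2 * Real.cosh u - 2 ≤ 2 * (Real.cosh u - S + S * Real.log S) := by linarith
    calc g * (2 * Real.cosh u - 2)
        ≤ g * (2 * (Real.cosh u - S + S * Real.log S)) :=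
          mul_le_mul_of_nonneg_left hin hg.le
      _ = 2 * (g * (Real.cosh u - S + S * Real.log S)) := by ring
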